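/- Let σ : ℝ → ℝ be the GeLU function σ(x) = x·Φ(x), where Φ is the standard normal cumulative distribution function. For every ε > 0 and every M > 0, there exists λ > 0 such that, setting f(a,b) = (√(2π)·λ²/8)·(σ((a+b)/λ) + σ((-a-b)/λ) − σ((a−b)/λ) − σ((−a+b)/λ)), one has |f(a,b) − a·b| ≤ ε for all a, b ∈ [-M, M]. In other words, a two-layer MLP with GeLU activation, input dimension 2, hidden dimension 4 and output dimension 1 can approximate the multiplication map (a,b) ↦ a·b uniformly on [-M,M]² to accuracy ε. -/
import Mathlib

open MeasureTheory Set Real intervalIntegral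

open MeasureTheory Set Real intervalIntegral

lemma gauss_integrable : Integrable (fun t : ℝ => Real.exp (-(t ^ 2) / 2)) := by
  have h := integrable_exp_neg_mul_sq (by norm_num : (0:ℝ) < 1/2)
  have : (fun t : ℝ => Real.exp (-(t ^ 2) / 2)) = fun t : ℝ => Real.exp (-(1/2) * t ^ 2) := by
    funext t; congr 1; ring
  rw [this]; exact h

lemma gauss_total : ∫ t : ℝ, Real.exp (-(t ^ 2) / 2) = Real.sqrt (2 * Real.pi) := by
  have h := integral_gaussian (1/2 : ℝ)
  have e : (fun t : ℝ => Real.exp (-(t ^ 2) / 2)) = fun t : ℝ => Real.exp (-(1/2 : ℝ) * t ^ 2) := by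
    funext t; congr 1; ring
  rw [e, h]; norm_num [mul_comm]

lemma gauss_Iic_zero : ∫ t in Iic (0:ℝ), Real.exp (-(t ^ 2) / 2) = Real.sqrt (2 * Real.pi) / 2 := by
  have hI := gauss_integrable
  have hsym : (∫ t in Iic (0:ℝ), Real.exp (-(t ^ 2) / 2))
      = ∫ t in Ioi (0:ℝ), Real.exp (-(t ^ 2) / 2) := by
    have := integral_comp_neg_Iic (0 : ℝ) (fun t => Real.exp (-(t ^ 2) / 2))
    simp only [neg_zero] at this
    rw [← this]
    congr 1; funext t; congr 1; ring
  have hsplit := integral_Iic_add_Ioi (b := (0:ℝ)) hI.integrableOn hI.integrableOn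
  rw [gauss_total] at hsplit
  linarith [hsym, hsplit]

lemma stdNormalCDF_eq' (x : ℝ) :
    (1 / Real.sqrt (2 * Real.pi)) * ∫ t in Set.Iic x, Real.exp (-(t ^ 2) / 2)
      = 1/2 + (Real.sqrt (2 * Real.pi))⁻¹ * ∫ t in (0:ℝ)..x, Real.exp (-(t ^ 2) / 2) := by
  have h := integral_Iic_sub_Iic (μ := volume) (a := (0:ℝ)) (b := x)
    gauss_integrable.integrableOn gauss_integrable.integrableOn
  have hpos : 0 < Real.sqrt (2 * Real.pi) := Real.sqrt_pos.mpr (by positivity)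
  rw [gauss_Iic_zero] at h
  have hx : ∫ t in Set.Iic x, Real.exp (-(t ^ 2) / 2)
      = Real.sqrt (2 * Real.pi) / 2 + ∫ t in (0:ℝ)..x, Real.exp (-(t ^ 2) / 2) := by
    linarith
  rw [hx, mul_add]
  rw [one_div, inv_mul_eq_div, div_right_comm, div_self hpos.ne']

lemma key_est (x : ℝ) :
    |x * (∫ t in (0:ℝ)..x, Real.exp (-(t ^ 2) / 2)) - x ^ 2| ≤ x ^ 4 / 2 := by
  have hint : IntervalIntegrable (fun t : ℝ => Real.exp (-(t ^ 2) / 2)) volume 0 x :=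
    gauss_integrable.intervalIntegrable
  have hIx : (∫ t in (0:ℝ)..x, Real.exp (-(t ^ 2) / 2)) - x
      = ∫ t in (0:ℝ)..x, (Real.exp (-(t ^ 2) / 2) - 1) := by
    rw [intervalIntegral.integral_sub hint (intervalIntegrable_const)]
    simp
  have hbound : |∫ t in (0:ℝ)..x, (Real.exp (-(t ^ 2) / 2) - 1)| ≤ x ^ 2 / 2 * |x - 0| := by
    rw [← Real.norm_eq_abs]
    apply intervalIntegral.norm_integral_le_of_norm_le_const
    intro t ht
    have ht2 : t ^ 2 ≤ x ^ 2 := by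
      rcases Set.mem_uIoc.mp ht with ⟨h1, h2⟩ | ⟨h1, h2⟩ <;> nlinarith
    have e1 : Real.exp (-(t ^ 2) / 2) ≤ 1 := by
      rw [← Real.exp_zero]; exact Real.exp_le_exp.mpr (by nlinarith)
    have e2 : 1 - t ^ 2 / 2 ≤ Real.exp (-(t ^ 2) / 2) := by
      have := Real.add_one_le_exp (-(t ^ 2) / 2); linarith
    rw [Real.norm_eq_abs, abs_le]
    constructor <;> nlinarith
  rw [sub_zero] at hbound
  have : x * (∫ t in (0:ℝ)..x, Real.exp (-(t ^ 2) / 2)) - x ^ 2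
      = x * ((∫ t in (0:ℝ)..x, Real.exp (-(t ^ 2) / 2)) - x) := by ring
  rw [this, abs_mul, hIx]
  calc |x| * |∫ t in (0:ℝ)..x, (Real.exp (-(t ^ 2) / 2) - 1)| ≤ |x| * (x ^ 2 / 2 * |x|) := by
        apply mul_le_mul_of_nonneg_left hbound (abs_nonneg x)
    _ = x ^ 4 / 2 := by
        have : |x| * |x| = x ^ 2 := by rw [← abs_mul, abs_mul_self]; ring
        nlinarith [this]

/-- The standard normal cumulative distribution function
`Φ(x) = (1/√(2π)) ∫_{-∞}^x e^{-t²/2} dt`. -/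
noncomputable def stdNormalCDF (x : ℝ) : ℝ :=
  (1 / Real.sqrt (2 * Real.pi)) * ∫ t in Set.Iic x, Real.exp (-(t ^ 2) / 2)

/-- The GeLU activation function `σ(x) = x·Φ(x)`. -/
noncomputable def gelu (x : ℝ) : ℝ := x * stdNormalCDF x

/-- A two-layer GeLU MLP (input dim 2, hidden dim 4, output dim 1) approximating
multiplication:
`f(a,b) = (√(2π)·λ²/8)·(σ((a+b)/λ) + σ((-a-b)/λ) − σ((a−b)/λ) − σ((−a+b)/λ))`. -/
noncomputable def geluMulMLP (lam a b : ℝ) : ℝ :=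
  Real.sqrt (2 * Real.pi) * lam ^ 2 / 8 *
    (gelu ((a + b) / lam) + gelu ((-a - b) / lam) - gelu ((a - b) / lam)
      - gelu ((-a + b) / lam))

lemma stdNormalCDF_eq (x : ℝ) :
    stdNormalCDF x = 1/2 + (Real.sqrt (2 * Real.pi))⁻¹ * ∫ t in (0:ℝ)..x, Real.exp (-(t ^ 2) / 2) :=
  stdNormalCDF_eq' x

lemma intOdd (y : ℝ) :
    (∫ t in (0:ℝ)..(-y), Real.exp (-(t ^ 2) / 2)) = -∫ t in (0:ℝ)..y, Real.exp (-(t ^ 2) / 2) := by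
  have h := intervalIntegral.integral_comp_neg (a := (0:ℝ)) (b := -y)
    (fun t => Real.exp (-(t ^ 2) / 2))
  simp only [neg_neg, neg_zero] at h
  have he : (∫ t in (0:ℝ)..(-y), Real.exp (-(t ^ 2) / 2))
      = ∫ t in (0:ℝ)..(-y), Real.exp (-((-t) ^ 2) / 2) := by
    congr 1; funext t; congr 2; ring
  rw [he, h, intervalIntegral.integral_symm]

lemma gelu_add_neg (y : ℝ) :
    gelu y + gelu (-y)
      = 2 * (Real.sqrt (2 * Real.pi))⁻¹ * (y * ∫ t in (0:ℝ)..y, Real.exp (-(t ^ 2) / 2)) := by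
  simp only [gelu, stdNormalCDF_eq, intOdd]
  ring

lemma key2 (lam u : ℝ) (hlam : 0 < lam) :
    |Real.sqrt (2 * Real.pi) * lam ^ 2 / 8 * (gelu (u / lam) + gelu (-(u / lam))) - u ^ 2 / 4|
      ≤ u ^ 4 / (8 * lam ^ 2) := by
  have hpos : 0 < Real.sqrt (2 * Real.pi) := Real.sqrt_pos.mpr (by positivity)
  have h := key_est (u / lam)
  rw [gelu_add_neg]
  set I := ∫ t in (0:ℝ)..(u / lam), Real.exp (-(t ^ 2) / 2) with hI
  have e1 : Real.sqrt (2 * Real.pi) * lam ^ 2 / 8 * (2 * (Real.sqrt (2 * Real.pi))⁻¹ * (u / lam * I))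
      - u ^ 2 / 4 = lam ^ 2 / 4 * (u / lam * I - (u / lam) ^ 2) := by
    field_simp
    ring
  rw [e1, abs_mul, abs_of_nonneg (by positivity : (0:ℝ) ≤ lam ^ 2 / 4)]
  calc lam ^ 2 / 4 * |u / lam * I - (u / lam) ^ 2| ≤ lam ^ 2 / 4 * ((u / lam) ^ 4 / 2) :=
        mul_le_mul_of_nonneg_left h (by positivity)
    _ = u ^ 4 / (8 * lam ^ 2) := by field_simp; ring

/-- For every `ε > 0` and `M > 0`, there is `λ > 0` such that the two-layer GeLU MLP
`f(a,b)` approximates the product `a·b` uniformly on `[-M, M]²` to accuracy `ε`. -/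
theorem geluMLP_approx_mul (ε M : ℝ) (hε : 0 < ε) (hM : 0 < M) :
    ∃ lam > (0 : ℝ), ∀ a ∈ Set.Icc (-M) M, ∀ b ∈ Set.Icc (-M) M,
      |geluMulMLP lam a b - a * b| ≤ ε := by
  have hsε : 0 < Real.sqrt ε := Real.sqrt_pos.mpr hε
  refine ⟨2 * M ^ 2 / Real.sqrt ε, by positivity, ?_⟩
  set lam := 2 * M ^ 2 / Real.sqrt ε with hlamdef
  have hlam0 : 0 < lam := by positivity
  have hl2 : lam ^ 2 = 4 * M ^ 4 / ε := by
    rw [hlamdef, div_pow, Real.sq_sqrt hε.le]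
    congr 1; ring
  intro a ha b hb
  obtain ⟨ha1, ha2⟩ := ha
  obtain ⟨hb1, hb2⟩ := hb
  have e1 : (-a - b) / lam = -((a + b) / lam) := by ring
  have e2 : (-a + b) / lam = -((a - b) / lam) := by ring
  have hf : geluMulMLP lam a b - a * b =
      (Real.sqrt (2 * Real.pi) * lam ^ 2 / 8 * (gelu ((a + b) / lam) + gelu (-((a + b) / lam)))
        - (a + b) ^ 2 / 4)
      - (Real.sqrt (2 * Real.pi) * lam ^ 2 / 8 * (gelu ((a - b) / lam) + gelu (-((a - b) / lam)))
        - (a - b) ^ 2 / 4) := by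
    unfold geluMulMLP
    rw [e1, e2]
    ring
  have k1 := key2 lam (a + b) hlam0
  have k2 := key2 lam (a - b) hlam0
  have hab4 : (a + b) ^ 4 ≤ 16 * M ^ 4 := by
    have h2 : (a + b) ^ 2 ≤ 4 * M ^ 2 := by nlinarith
    nlinarith [sq_nonneg (a + b)]
  have hab4' : (a - b) ^ 4 ≤ 16 * M ^ 4 := by
    have h2 : (a - b) ^ 2 ≤ 4 * M ^ 2 := by nlinarith
    nlinarith [sq_nonneg (a - b)]
  have hl2pos : 0 < lam ^ 2 := by positivity
  have hsum : 16 * M ^ 4 / (8 * lam ^ 2) + 16 * M ^ 4 / (8 * lam ^ 2) = ε := by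
    rw [hl2]
    field_simp
    ring
  rw [hf]
  calc |_ - _| ≤ |Real.sqrt (2 * Real.pi) * lam ^ 2 / 8 *
          (gelu ((a + b) / lam) + gelu (-((a + b) / lam))) - (a + b) ^ 2 / 4|
        + |Real.sqrt (2 * Real.pi) * lam ^ 2 / 8 *
          (gelu ((a - b) / lam) + gelu (-((a - b) / lam))) - (a - b) ^ 2 / 4| := abs_sub _ _
    _ ≤ (a + b) ^ 4 / (8 * lam ^ 2) + (a - b) ^ 4 / (8 * lam ^ 2) := add_le_add k1 k2
    _ ≤ 16 * M ^ 4 / (8 * lam ^ 2) + 16 * M ^ 4 / (8 * lam ^ 2) := by gcongr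
    _ = ε := hsum
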